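/- Let a, b, r be positive integers with a < b, gcd(a, b) = 1 and a + b ≤ r (so that the star subdivision at v = (1/r)(1, a, b) is good). Then the ℚ-linear map Φ : Θ_r → Θ_a × Θ_b defined by Φ(θ) = ((j ↦ Σ_{0 ≤ i < r, i ≡ j mod a} θ(i mod r)), (j ↦ Σ_{0 ≤ i < r, i ≡ j mod b} θ(i mod r))) is surjective: for all η_a ∈ Θ_a and η_b ∈ Θ_b there exists θ ∈ Θ_r with Φ(θ) = (η_a, η_b). -/

import Mathlib

open scoped BigOperators

/-- The pushforward `(φ_k)⋆ : Θ_r → Θ_s`: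
`(push r s θ)(j) = ∑_{0 ≤ i < r, i ≡ j mod s} θ(i mod r)`. -/
def push (r s : ℕ) (θ : ZMod r → ℚ) : ZMod s → ℚ :=
  fun j => ∑ i ∈ (Finset.range r).filter (fun i => ((i : ℕ) : ZMod s) = j), θ (i : ZMod r)

namespace StarAux

/-- indicator of `m` in `ZMod r`. -/
def ind (r m : ℕ) : ZMod r → ℚ := fun x => if x = (m : ZMod r) then 1 else 0

lemma push_ind (r s m : ℕ) (hm : m < r) (j : ZMod s) :
    push r s (ind r m) j = ind s m j := by
  classical
  unfold push ind
  rw [Finset.sum_congr rfl (fun i hi => ?_), Finset.sum_ite_eq' _ m (fun _ => (1:ℚ))]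
  · simp only [Finset.mem_filter, Finset.mem_range]
    by_cases h : ((m : ℕ) : ZMod s) = j
    · simp [h, hm, eq_comm]
    · rw [if_neg (by simp [h, hm]), if_neg (fun hj => h hj.symm)]
  · simp only [Finset.mem_filter, Finset.mem_range] at hi
    refine if_congr ?_ rfl rfl
    rw [ZMod.natCast_eq_natCast_iff', Nat.mod_eq_of_lt hi.1, Nat.mod_eq_of_lt hm]

lemma sum_ind (r m : ℕ) (hm : m < r) :
    ∑ i ∈ Finset.range r, ind r m (i : ZMod r) = 1 := by
  classical
  unfold ind
  rw [Finset.sum_congr rfl (fun i hi => ?_), Finset.sum_ite_eq' _ m (fun _ => (1:ℚ))]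
  · simp [hm]
  · simp only [Finset.mem_range] at hi
    refine if_congr ?_ rfl rfl
    rw [ZMod.natCast_eq_natCast_iff', Nat.mod_eq_of_lt hi, Nat.mod_eq_of_lt hm]

lemma sum_range_zmod {s : ℕ} [NeZero s] (F : ZMod s → ℚ) :
    ∑ j ∈ Finset.range s, F (j : ZMod s) = ∑ x : ZMod s, F x := by
  refine Finset.sum_nbij' (fun j => (j : ZMod s)) (fun x => x.val) ?_ ?_ ?_ ?_ ?_
  · intro j hj; exact Finset.mem_univ _
  · intro x _; exact Finset.mem_range.mpr (ZMod.val_lt x)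
  · intro j hj; exact ZMod.val_cast_of_lt (Finset.mem_range.mp hj)
  · intro x _; exact ZMod.natCast_rightInverse x
  · intro j hj; rfl

/-- reindexing a sum over `ZMod s` by multiplication by a unit `t`. -/
lemma sum_mul_unit {s t : ℕ} [NeZero s] (hcop : Nat.Coprime t s) (F : ZMod s → ℚ) :
    ∑ k ∈ Finset.range s, F ((k * t : ℕ) : ZMod s) = ∑ x : ZMod s, F x := by
  have h1 : ∑ k ∈ Finset.range s, F ((k * t : ℕ) : ZMod s)
      = ∑ x : ZMod s, F (x * (t : ZMod s)) := by
    rw [Finset.sum_congr rfl (fun k _ => by rw [Nat.cast_mul]),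
      sum_range_zmod (fun x => F (x * (t : ZMod s)))]
  rw [h1]
  exact Fintype.sum_bijective _ ((Units.mulRight (ZMod.unitOfCoprime t hcop)).bijective)
    _ _ (fun x => rfl)

/-- the building block: `δ_{m t % s + t} - δ_{m t % s}` on `ZMod r`. -/
def step (r s t m : ℕ) : ZMod r → ℚ := ind r (m * t % s + t) - ind r (m * t % s)

/-- the chain realizing `δ_{k t} - δ_0` mod `s`. -/
def chain (r s t k : ℕ) : ZMod r → ℚ := ∑ m ∈ Finset.range k, step r s t m

/-- the full preimage of `η`. -/
def theta (r s t : ℕ) (η : ZMod s → ℚ) : ZMod r → ℚ :=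
  ∑ k ∈ Finset.range s, η ((k * t : ℕ) : ZMod s) • chain r s t k

lemma sum_step {r s t : ℕ} (hs : 0 < s) (hst : s + t ≤ r) (m : ℕ) :
    ∑ i ∈ Finset.range r, step r s t m (i : ZMod r) = 0 := by
  have hmod : m * t % s < s := Nat.mod_lt _ hs
  unfold step
  simp only [Pi.sub_apply, Finset.sum_sub_distrib]
  rw [sum_ind r _ (by omega), sum_ind r _ (by omega), sub_self]

lemma push_step_s {r s t : ℕ} (hs : 0 < s) (hst : s + t ≤ r) (m : ℕ) (j : ZMod s) :
    push r s (step r s t m) j = ind s ((m + 1) * t) j - ind s (m * t) j := by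
  have hmod : m * t % s < s := Nat.mod_lt _ hs
  unfold step push
  simp only [Pi.sub_apply, Finset.sum_sub_distrib]
  have h1 := push_ind r s (m * t % s + t) (by omega) j
  have h2 := push_ind r s (m * t % s) (by omega) j
  unfold push at h1 h2
  rw [h1, h2]
  have e1 : ((m * t % s + t : ℕ) : ZMod s) = (((m + 1) * t : ℕ) : ZMod s) := by
    push_cast [ZMod.natCast_mod]; ring
  have e2 : ((m * t % s : ℕ) : ZMod s) = ((m * t : ℕ) : ZMod s) := by
    push_cast [ZMod.natCast_mod]; ring
  unfold ind
  rw [e1, e2]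

lemma push_step_t {r s t : ℕ} (hs : 0 < s) (hst : s + t ≤ r) (m : ℕ) (j : ZMod t) :
    push r t (step r s t m) j = 0 := by
  have hmod : m * t % s < s := Nat.mod_lt _ hs
  unfold step push
  simp only [Pi.sub_apply, Finset.sum_sub_distrib]
  have h1 := push_ind r t (m * t % s + t) (by omega) j
  have h2 := push_ind r t (m * t % s) (by omega) j
  unfold push at h1 h2
  rw [h1, h2]
  unfold ind
  have e1 : ((m * t % s + t : ℕ) : ZMod t) = ((m * t % s : ℕ) : ZMod t) := by
    push_cast; simp
  rw [e1, sub_self]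

lemma push_chain_s {r s t : ℕ} (hs : 0 < s) (hst : s + t ≤ r) (k : ℕ) (j : ZMod s) :
    push r s (chain r s t k) j = ind s (k * t) j - ind s 0 j := by
  unfold chain push
  simp only [Finset.sum_apply]
  rw [Finset.sum_comm]
  have : ∀ m ∈ Finset.range k,
      (∑ i ∈ (Finset.range r).filter (fun i => ((i : ℕ) : ZMod s) = j),
        step r s t m (i : ZMod r)) = ind s ((m + 1) * t) j - ind s (m * t) j := by
    intro m _; exact push_step_s hs hst m j
  rw [Finset.sum_congr rfl this, Finset.sum_range_sub (fun m => ind s (m * t) j)]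
  simp

lemma push_chain_t {r s t : ℕ} (hs : 0 < s) (hst : s + t ≤ r) (k : ℕ) (j : ZMod t) :
    push r t (chain r s t k) j = 0 := by
  unfold chain push
  simp only [Finset.sum_apply]
  rw [Finset.sum_comm]
  have : ∀ m ∈ Finset.range k,
      (∑ i ∈ (Finset.range r).filter (fun i => ((i : ℕ) : ZMod t) = j),
        step r s t m (i : ZMod r)) = 0 := by
    intro m _; exact push_step_t hs hst m j
  rw [Finset.sum_congr rfl this, Finset.sum_const, smul_zero]

lemma sum_chain {r s t : ℕ} (hs : 0 < s) (hst : s + t ≤ r) (k : ℕ) :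
    ∑ i ∈ Finset.range r, chain r s t k (i : ZMod r) = 0 := by
  unfold chain
  simp only [Finset.sum_apply]
  rw [Finset.sum_comm]
  rw [Finset.sum_congr rfl (fun m _ => sum_step hs hst m), Finset.sum_const, smul_zero]

lemma sum_theta {r s t : ℕ} (hs : 0 < s) (hst : s + t ≤ r) (η : ZMod s → ℚ) :
    ∑ i ∈ Finset.range r, theta r s t η (i : ZMod r) = 0 := by
  unfold theta
  simp only [Finset.sum_apply, Pi.smul_apply, smul_eq_mul]
  rw [Finset.sum_comm]
  refine Finset.sum_eq_zero (fun k _ => ?_)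
  rw [← Finset.mul_sum, sum_chain hs hst k, mul_zero]

lemma push_theta_s {r s t : ℕ} (hs : 0 < s) (hst : s + t ≤ r) (hcop : Nat.Coprime t s)
    (η : ZMod s → ℚ) (hη : ∑ j ∈ Finset.range s, η (j : ZMod s) = 0) (j : ZMod s) :
    push r s (theta r s t η) j = η j := by
  haveI : NeZero s := ⟨hs.ne'⟩
  unfold theta push
  simp only [Finset.sum_apply, Pi.smul_apply, smul_eq_mul]
  rw [Finset.sum_comm]
  have step1 : ∀ k ∈ Finset.range s,
      (∑ i ∈ (Finset.range r).filter (fun i => ((i : ℕ) : ZMod s) = j),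
        η ((k * t : ℕ) : ZMod s) * chain r s t k (i : ZMod r))
      = η ((k * t : ℕ) : ZMod s) * (ind s (k * t) j - ind s 0 j) := by
    intro k _
    rw [← Finset.mul_sum]
    congr 1
    exact push_chain_s hs hst k j
  rw [Finset.sum_congr rfl step1]
  simp only [mul_sub, Finset.sum_sub_distrib, ← Finset.sum_mul]
  have hzero : ∑ k ∈ Finset.range s, η ((k * t : ℕ) : ZMod s) = 0 := by
    rw [sum_mul_unit hcop η, ← sum_range_zmod η]; exact hη
  rw [hzero, zero_mul, sub_zero]
  have step2 : ∀ k ∈ Finset.range s,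
      η ((k * t : ℕ) : ZMod s) * ind s (k * t) j
        = (fun x : ZMod s => η x * (if j = x then 1 else 0)) ((k * t : ℕ) : ZMod s) := by
    intro k _; rfl
  rw [Finset.sum_congr rfl step2,
    sum_mul_unit hcop (fun x : ZMod s => η x * (if j = x then 1 else 0))]
  simp

lemma push_theta_t {r s t : ℕ} (hs : 0 < s) (hst : s + t ≤ r)
    (η : ZMod s → ℚ) (j : ZMod t) :
    push r t (theta r s t η) j = 0 := by
  unfold theta push
  simp only [Finset.sum_apply, Pi.smul_apply, smul_eq_mul]
  rw [Finset.sum_comm]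
  refine Finset.sum_eq_zero (fun k _ => ?_)
  rw [← Finset.mul_sum]
  have h := push_chain_t hs hst k j
  unfold push at h
  rw [h, mul_zero]

end StarAux

/-- For `a < b` coprime with `a + b ≤ r` (so the star subdivision at `(1/r)(1,a,b)` is
good), the map `Φ = (push r a, push r b) : Θ_r → Θ_a × Θ_b` is surjective, where
`Θ_s = {θ : ℤ/sℤ → ℚ | ∑ θ = 0}`. -/
theorem stmt_10 (r a b : ℕ) (ha : 0 < a) (hab : a < b) (hcop : Nat.gcd a b = 1)
    (habr : a + b ≤ r)
    (ηa : ZMod a → ℚ) (hηa : ∑ j ∈ Finset.range a, ηa (j : ZMod a) = 0)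
    (ηb : ZMod b → ℚ) (hηb : ∑ j ∈ Finset.range b, ηb (j : ZMod b) = 0) :
    ∃ θ : ZMod r → ℚ,
      (∑ i ∈ Finset.range r, θ (i : ZMod r) = 0) ∧
      push r a θ = ηa ∧ push r b θ = ηb := by
  have hb : 0 < b := lt_trans ha hab
  have hba : b + a ≤ r := by omega
  have hcop' : Nat.Coprime b a := (Nat.coprime_comm.mp hcop)
  have hcop'' : Nat.Coprime a b := hcop
  refine ⟨StarAux.theta r a b ηa + StarAux.theta r b a ηb, ?_, ?_, ?_⟩
  · simp only [Pi.add_apply, Finset.sum_add_distrib]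
    rw [StarAux.sum_theta ha habr ηa, StarAux.sum_theta hb hba ηb, add_zero]
  · funext j
    have hpush : push r a (StarAux.theta r a b ηa + StarAux.theta r b a ηb) j
        = push r a (StarAux.theta r a b ηa) j + push r a (StarAux.theta r b a ηb) j := by
      unfold push; simp [Finset.sum_add_distrib]
    rw [hpush, StarAux.push_theta_s ha habr hcop' ηa hηa j,
      StarAux.push_theta_t hb hba ηb j, add_zero]
  · funext j
    have hpush : push r b (StarAux.theta r a b ηa + StarAux.theta r b a ηb) j
        = push r b (StarAux.theta r a b ηa) j + push r b (StarAux.theta r b a ηb) j := by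
      unfold push; simp [Finset.sum_add_distrib]
    rw [hpush, StarAux.push_theta_t ha habr ηa j,
      StarAux.push_theta_s hb hba hcop'' ηb hηb j, zero_add]
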